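/- If Γ ⊢ ⊥ in P[⊥_w] and At⁺(φ) ⊆ At⁺(Γ), then Γ ⊢ φ in P[⊥_w]. -/
import Mathlib


/-- Infons: formulas built from atoms, ⊤, ⊥, conjunction and primal implication. -/
inductive Infon : Type
  | atom : ℕ → Infon
  | top : Infon
  | bot : Infon
  | and : Infon → Infon → Infon
  | imp : Infon → Infon → Infon
deriving DecidableEq

/-- Derivability in the basic primal infon logic P (⊥ is an ordinary atom, no rule for it). -/
inductive DerP : Set Infon → Infon → Prop
  | top (Γ : Set Infon) : DerP Γ .top
  | id (φ : Infon) : DerP {φ} φ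
  | weak {Γ φ} (Δ : Set Infon) : DerP Γ φ → DerP (Γ ∪ Δ) φ
  | cut {Γ φ ψ} : DerP Γ φ → DerP (insert φ Γ) ψ → DerP Γ ψ
  | andI {Γ φ ψ} : DerP Γ φ → DerP Γ ψ → DerP Γ (.and φ ψ)
  | andE1 {Γ φ ψ} : DerP Γ (.and φ ψ) → DerP Γ φ
  | andE2 {Γ φ ψ} : DerP Γ (.and φ ψ) → DerP Γ ψ
  | impI {Γ ψ} (φ : Infon) : DerP Γ ψ → DerP Γ (.imp φ ψ)
  | impE {Γ φ ψ} : DerP Γ φ → DerP Γ (.imp φ ψ) → DerP Γ ψ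

/-- Derivability in P[⊥_w]: P plus the weak ⊥-elimination rule. -/
inductive DerW : Set Infon → Infon → Prop
  | top (Γ : Set Infon) : DerW Γ .top
  | id (φ : Infon) : DerW {φ} φ
  | weak {Γ φ} (Δ : Set Infon) : DerW Γ φ → DerW (Γ ∪ Δ) φ
  | cut {Γ φ ψ} : DerW Γ φ → DerW (insert φ Γ) ψ → DerW Γ ψ
  | andI {Γ φ ψ} : DerW Γ φ → DerW Γ ψ → DerW Γ (.and φ ψ)
  | andE1 {Γ φ ψ} : DerW Γ (.and φ ψ) → DerW Γ φ
  | andE2 {Γ φ ψ} : DerW Γ (.and φ ψ) → DerW Γ ψ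
  | impI {Γ ψ} (φ : Infon) : DerW Γ ψ → DerW Γ (.imp φ ψ)
  | impE {Γ φ ψ} : DerW Γ φ → DerW Γ (.imp φ ψ) → DerW Γ ψ
  | botEw {Γ φ ψ} : DerW Γ .bot → DerW Γ (.imp φ ψ) → DerW Γ ψ

/-- Positive atoms of an infon. -/
def posAt : Infon → Set Infon
  | .and φ ψ => posAt φ ∪ posAt ψ
  | .imp _ ψ => posAt ψ
  | φ => {φ}

/-- Positive atoms of a context. -/
def posCtx (Γ : Set Infon) : Set Infon := ⋃ φ ∈ Γ, posAt φ

lemma derW_mem {Γ : Set Infon} {ψ : Infon} (h : ψ ∈ Γ) : DerW Γ ψ := by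
  have := DerW.weak Γ (DerW.id ψ)
  have heq : {ψ} ∪ Γ = Γ := by
    apply Set.union_eq_self_of_subset_left
    simpa using h
  rwa [heq] at this

lemma derW_posAt {Γ : Set Infon} {ψ a : Infon} (hbot : DerW Γ .bot)
    (hψ : DerW Γ ψ) (ha : a ∈ posAt ψ) : DerW Γ a := by
  induction ψ generalizing a with
  | and φ χ ih1 ih2 =>
    rcases ha with ha | ha
    · exact ih1 (DerW.andE1 hψ) ha
    · exact ih2 (DerW.andE2 hψ) ha
  | imp φ χ _ ih2 => exact ih2 (DerW.botEw hbot hψ) ha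
  | atom n => simp only [posAt, Set.mem_singleton_iff] at ha; subst ha; exact hψ
  | top => simp only [posAt, Set.mem_singleton_iff] at ha; subst ha; exact hψ
  | bot => simp only [posAt, Set.mem_singleton_iff] at ha; subst ha; exact hψ

/-- If Γ ⊢ ⊥ in P[⊥_w] and At⁺(φ) ⊆ At⁺(Γ), then Γ ⊢ φ in P[⊥_w]. -/
theorem derW_of_atplus_subset (Γ : Set Infon) (φ : Infon)
    (hbot : DerW Γ .bot) (hsub : posAt φ ⊆ posCtx Γ) : DerW Γ φ := by
  have key : ∀ a ∈ posCtx Γ, DerW Γ a := by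
    intro a ha
    rcases Set.mem_iUnion₂.1 ha with ⟨χ, hχ, haχ⟩
    exact derW_posAt hbot (derW_mem hχ) haχ
  induction φ with
  | and φ ψ ih1 ih2 =>
    exact DerW.andI (ih1 fun a ha => hsub (Or.inl ha))
      (ih2 fun a ha => hsub (Or.inr ha))
  | imp φ ψ _ ih2 => exact DerW.impI φ (ih2 hsub)
  | atom n => exact key _ (hsub rfl)
  | top => exact DerW.top Γ
  | bot => exact key _ (hsub rfl)
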